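/- For ξ ∈ ∂F, an element g lies in the horosphere H_ξ = {g : h_ξ(g) = 0} if and only if the reduced form of g is g = ξ_1ξ_2···ξ_n t_1···t_n for some n ≥ 0 and t_1,...,t_n ∈ S with t_1 ≠ ξ_{n+1}. In particular, every element of H_ξ has even word length. -/

import Mathlib

open Filter

/-- The symmetric generating set of the free group of rank `r`. -/
abbrev Letter (r : ℕ) := Fin r × Bool

/-- The inverse of a letter. -/
def Letter.inv {r : ℕ} (s : Letter r) : Letter r := (s.1, !s.2)

/-- The boundary of the free group of rank `r`. -/
abbrev Boundary (r : ℕ) := {ξ : ℕ → Letter r // ∀ i, ξ (i + 1) ≠ Letter.inv (ξ i)}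

/-- The initial segment `ξ₁⋯ξₙ` of a boundary point, as a word. -/
def prefixList {r : ℕ} (ξ : Boundary r) (n : ℕ) : List (Letter r) :=
  List.ofFn (fun i : Fin n => ξ.1 i)

/-- The horofunction associated to `ξ`, evaluated via
`h_ξ(g) = lim_{k→∞} (d(g, ξ₁⋯ξ_k) - k)`. -/
def horofn {r : ℕ} (ξ : Boundary r) (g : FreeGroup (Fin r)) (v : ℤ) : Prop :=
  Tendsto
    (fun k : ℕ =>
      (((FreeGroup.toWord (g⁻¹ * FreeGroup.mk (prefixList ξ k))).length : ℤ) - (k : ℤ)))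
    atTop (nhds v)

namespace HoroAux

variable {r : ℕ}

/-- A word is reduced iff no letter is followed by its inverse. -/
def IsRed (L : List (Letter r)) : Prop := List.IsChain (fun a b => b ≠ Letter.inv a) L

lemma inv_inv (s : Letter r) : Letter.inv (Letter.inv s) = s := by
  simp [Letter.inv]

lemma cancel_iff (x hd : Letter r) : (x.1 = hd.1 ∧ x.2 = !hd.2) ↔ hd = Letter.inv x := by
  obtain ⟨a, b⟩ := x; obtain ⟨c, d⟩ := hd
  simp only [Letter.inv, Prod.mk.injEq]
  constructor
  · rintro ⟨h1, h2⟩; subst h1; subst h2; simp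
  · rintro ⟨h1, h2⟩; subst h1; subst h2; simp

lemma isRed_reduce (L : List (Letter r)) : IsRed (FreeGroup.reduce L) := by
  induction L with
  | nil => simp [IsRed]
  | cons x L ih =>
    rw [FreeGroup.reduce.cons]
    rcases h : FreeGroup.reduce L with _ | ⟨hd, tl⟩
    · simp [IsRed]
    · rw [h] at ih
      by_cases hc : x.1 = hd.1 ∧ x.2 = !hd.2
      · simpa [hc, IsRed] using ih.tail
      · simp only [if_neg hc]
        exact List.IsChain.cons_cons (fun he => hc ((cancel_iff x hd).mpr he)) ih

lemma isRed_toWord (g : FreeGroup (Fin r)) : IsRed (FreeGroup.toWord g) := by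
  have := isRed_reduce (FreeGroup.toWord g)
  rwa [FreeGroup.reduce_toWord] at this

lemma reduce_eq_self {L : List (Letter r)} (h : IsRed L) : FreeGroup.reduce L = L := by
  induction L with
  | nil => rfl
  | cons x L ih =>
    rw [FreeGroup.reduce.cons, ih h.tail]
    cases L with
    | nil => rfl
    | cons hd tl =>
      have hx : hd ≠ Letter.inv x := (List.isChain_cons_cons.mp h).1
      show (if x.1 = hd.1 ∧ x.2 = !hd.2 then tl else x :: hd :: tl) = x :: hd :: tl
      rw [if_neg (fun hc => hx ((cancel_iff x hd).mp hc))]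

lemma isRed_invRev {L : List (Letter r)} (h : IsRed L) : IsRed (FreeGroup.invRev L) := by
  rw [FreeGroup.invRev, IsRed, List.isChain_reverse, List.isChain_map]
  refine h.imp (fun a b hab => ?_)
  show (a.1, !a.2) ≠ Letter.inv (b.1, !b.2)
  have : Letter.inv (b.1, !b.2) = b := by simp [Letter.inv]
  rw [this]
  intro he
  exact hab (by rw [← he]; rfl)

lemma isRed_seg (ξ : Boundary r) (m d : ℕ) :
    IsRed (List.ofFn (fun i : Fin d => ξ.1 (m + i))) := by
  rw [IsRed, List.isChain_iff_getElem]
  intro i hi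
  simp only [List.getElem_ofFn]
  show ξ.1 (m + (i + 1)) ≠ Letter.inv (ξ.1 (m + i))
  rw [show m + (i + 1) = (m + i) + 1 by omega]
  exact ξ.2 (m + i)

lemma length_prefixList (ξ : Boundary r) (n : ℕ) : (prefixList ξ n).length = n := by
  simp [prefixList]

lemma prefixList_succ (ξ : Boundary r) (n : ℕ) :
    prefixList ξ (n + 1) = prefixList ξ n ++ [ξ.1 n] := by
  rw [prefixList, List.ofFn_succ', List.concat_eq_append]
  simp only [Fin.coe_castSucc, Fin.val_last]
  rfl

lemma prefixList_add (ξ : Boundary r) (m d : ℕ) :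
    prefixList ξ (m + d) = prefixList ξ m ++ List.ofFn (fun i : Fin d => ξ.1 (m + i)) := by
  induction d with
  | zero => simp [prefixList]
  | succ d ih =>
    rw [show m + (d + 1) = (m + d) + 1 from rfl, prefixList_succ, ih, List.ofFn_succ',
      List.concat_eq_append, ← List.append_assoc]
    simp

end HoroAux

open HoroAux in
/-- An element `g` lies in the horosphere `H_ξ = {g : h_ξ(g) = 0}` if and only if the
reduced form of `g` is `g = ξ₁⋯ξₙ t₁⋯tₙ` for some `n ≥ 0` and letters `t₁,…,tₙ`
with `t₁ ≠ ξ_{n+1}`.  In particular, every element of `H_ξ` has even word length. -/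
theorem horosphere_characterization (r : ℕ) (hr : 2 ≤ r) (ξ : Boundary r)
    (g : FreeGroup (Fin r)) :
    (horofn ξ g 0 ↔
      ∃ n : ℕ, ∃ t : List (Letter r),
        FreeGroup.toWord g = prefixList ξ n ++ t ∧ t.length = n ∧
        ∀ a ∈ t.head?, a ≠ ξ.1 n) ∧
    (horofn ξ g 0 → Even (FreeGroup.toWord g).length) := by
  classical
  set w := FreeGroup.toWord g with hw
  have hwred : IsRed w := isRed_toWord g
  have hex : ∃ n, ¬ prefixList ξ (n + 1) <+: w := by
    refine ⟨w.length, fun hp => ?_⟩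
    have := hp.length_le
    rw [length_prefixList] at this
    omega
  set m := Nat.find hex with hm
  have hnot : ¬ prefixList ξ (m + 1) <+: w := Nat.find_spec hex
  have hpref : prefixList ξ m <+: w := by
    rcases Nat.eq_zero_or_pos m with h0 | hpos
    · rw [h0]; simpa [prefixList] using List.nil_prefix
    · have h1 := Nat.find_min hex (show m - 1 < m by omega)
      rw [not_not] at h1
      rwa [Nat.sub_add_cancel hpos] at h1
  have hmw : m ≤ w.length := by
    have := hpref.length_le; rwa [length_prefixList] at this
  have htake : prefixList ξ m = w.take m := by
    have := List.prefix_iff_eq_take.mp hpref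
    rwa [length_prefixList] at this
  set t := w.drop m with ht
  have hsplit : w = prefixList ξ m ++ t := by
    rw [htake, ht, List.take_append_drop]
  have htlen : t.length = w.length - m := by simp [ht]
  have hthead : ∀ a ∈ t.head?, a ≠ ξ.1 m := by
    intro a ha he
    apply hnot
    cases hcase : t with
    | nil => rw [hcase] at ha; simp at ha
    | cons b t' =>
      rw [hcase] at ha
      simp only [List.head?_cons, Option.mem_some_iff] at ha
      rw [prefixList_succ, hsplit, hcase]
      exact ⟨t', by simp [ha, he]⟩
  -- key length computation
  have hkey : ∀ k, m ≤ k → (FreeGroup.toWord (g⁻¹ * FreeGroup.mk (prefixList ξ k))).length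
      = (w.length - m) + (k - m) := by
    intro k hk
    obtain ⟨d, rfl⟩ := Nat.exists_eq_add_of_le hk
    set s := List.ofFn (fun i : Fin d => ξ.1 (m + i)) with hs
    have hgm : g⁻¹ * FreeGroup.mk (prefixList ξ (m + d))
        = FreeGroup.mk (FreeGroup.invRev t ++ s) :=
      calc g⁻¹ * FreeGroup.mk (prefixList ξ (m + d))
          = (FreeGroup.mk (prefixList ξ m) * FreeGroup.mk t)⁻¹ *
            (FreeGroup.mk (prefixList ξ m) * FreeGroup.mk s) := by
            rw [FreeGroup.mul_mk, FreeGroup.mul_mk, ← hsplit, ← prefixList_add]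
            rw [hw, FreeGroup.mk_toWord]
        _ = (FreeGroup.mk t)⁻¹ * FreeGroup.mk s := by group
        _ = FreeGroup.mk (FreeGroup.invRev t ++ s) := by
            rw [FreeGroup.inv_mk, FreeGroup.mul_mk]
    have hred2 : IsRed (FreeGroup.invRev t ++ s) := by
      rw [IsRed, List.isChain_append]
      refine ⟨isRed_invRev (hwred.suffix ⟨_, hsplit.symm⟩), isRed_seg ξ m d, ?_⟩
      intro x hx y hy
      rw [FreeGroup.invRev, List.getLast?_reverse, List.head?_map] at hx
      rcases hhead : t.head? with _ | a
      · rw [hhead] at hx; simp at hx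
      · rw [hhead] at hx
        simp only [Option.map_some, Option.mem_some_iff] at hx
        cases d with
        | zero => simp [hs] at hy
        | succ e =>
          rw [hs, List.ofFn_succ] at hy
          simp only [List.head?_cons, Option.mem_some_iff] at hy
          subst hy
          subst hx
          rw [show Letter.inv (a.1, !a.2) = a by simp [Letter.inv]]
          have := hthead a (by rw [hhead]; rfl)
          simpa using fun he => this (by rw [he])
    rw [hgm, FreeGroup.toWord_mk, reduce_eq_self hred2, List.length_append,
      FreeGroup.invRev_length, htlen, hs, List.length_ofFn]
    omega
  have hconst : Tendsto (fun k : ℕ =>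
      (((FreeGroup.toWord (g⁻¹ * FreeGroup.mk (prefixList ξ k))).length : ℤ) - (k : ℤ)))
      atTop (nhds ((w.length : ℤ) - 2 * m)) := by
    refine Tendsto.congr' ?_ tendsto_const_nhds
    filter_upwards [eventually_ge_atTop m] with k hk
    rw [hkey k hk]
    have h1 : ((w.length - m + (k - m) : ℕ) : ℤ) = (w.length : ℤ) - m + (k - m) := by
      push_cast [Nat.cast_sub hmw, Nat.cast_sub hk]; ring
    rw [h1]; ring
  have hm2 : horofn ξ g 0 ↔ w.length = 2 * m := by
    constructor
    · intro h
      have := tendsto_nhds_unique hconst h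
      omega
    · intro h
      show Tendsto _ atTop (nhds (0 : ℤ))
      have : ((w.length : ℤ) - 2 * m) = 0 := by omega
      rwa [this] at hconst
  refine ⟨⟨fun h => ?_, fun h => ?_⟩, fun h => ?_⟩
  · have hlen := hm2.mp h
    exact ⟨m, t, hsplit, by omega, hthead⟩
  · obtain ⟨n, t', hw', hlen', hhead'⟩ := h
    have hPn : ¬ prefixList ξ (n + 1) <+: w := by
      intro hp
      rw [prefixList_succ, hw'] at hp
      have h1 : [ξ.1 n] <+: t' := (List.prefix_append_right_inj _).mp hp
      rcases t' with _ | ⟨b, t''⟩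
      · have := h1.length_le; simp at this
      · obtain ⟨s', hs'⟩ := h1
        have hb : ξ.1 n = b := by
          have := congrArg List.head? hs'
          simpa using this
        exact hhead' b rfl hb.symm
    have hmn : m ≤ n := Nat.find_le hPn
    have hnm : n ≤ m := by
      by_contra hlt
      push_neg at hlt
      apply hnot
      have h1 : prefixList ξ (m + 1) <+: prefixList ξ n := by
        have h2 : prefixList ξ n = prefixList ξ (m + 1) ++
            List.ofFn (fun i : Fin (n - (m + 1)) => ξ.1 ((m + 1) + i)) := by
          rw [← prefixList_add]; congr 1; omega
        rw [h2]; exact List.prefix_append _ _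
      exact h1.trans ⟨t', hw'.symm⟩
    have hnmeq : n = m := le_antisymm hnm hmn
    apply hm2.mpr
    rw [hw', List.length_append, hlen', length_prefixList]
    omega
  · have hlen := hm2.mp h
    exact ⟨m, by omega⟩
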